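/- For smooth (e.g., piecewise linear) paths X, Y : [0,T] → R^d, the function U(s,t) = k(X|_{[0,s]}, Y|_{[0,t]}) = Σ_{j≥0} Σ_{|α|=j} S(X|_{[0,s]})^α S(Y|_{[0,t]})^α satisfies the hyperbolic PDE ∂²U/∂s∂t = (Ẋ_s · Ẏ_t) U with boundary conditions U(0,·) = 1 and U(·,0) = 1. -/

import Mathlib

open MeasureTheory intervalIntegral

/-- Iterated-integral signature coefficient of a path `X : ℝ → (Fin d → ℝ)` over `[a, b]`. -/
noncomputable def sig {d : ℕ} (X : ℝ → Fin d → ℝ) : List (Fin d) → ℝ → ℝ → ℝ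
  | [], _, _ => 1
  | a :: w, s, t => ∫ u in s..t, deriv (fun r => X r a) u * sig X w u t

/-- Auxiliary: `|∫_s^t |t-u|^n du| = |t-s|^(n+1)/(n+1)`. -/
theorem sigAux_abs_int_pow (n : ℕ) (s t : ℝ) :
    |∫ u in s..t, |t-u|^n| = |t-s|^(n+1)/(n+1) := by
  have h := intervalIntegral.integral_comp_sub_left (a := s) (b := t) (fun v => |v|^n) t
  simp only [sub_self] at h
  rw [h]
  rcases le_or_gt 0 (t - s) with hy | hy
  · have : ∫ v in (0:ℝ)..(t-s), |v|^n = ∫ v in (0:ℝ)..(t-s), v^n := by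
      apply intervalIntegral.integral_congr
      intro v hv
      rw [Set.uIcc_of_le hy] at hv
      simp [abs_of_nonneg hv.1]
    rw [this, integral_pow, abs_div, abs_of_nonneg hy,
      abs_of_nonneg (by positivity : (0:ℝ) ≤ (n:ℝ)+1)]
    simp [abs_of_nonneg (by positivity : (0:ℝ) ≤ (t-s)^(n+1))]
  · have : ∫ v in (0:ℝ)..(t-s), |v|^n = ∫ v in (0:ℝ)..(t-s), (-v)^n := by
      apply intervalIntegral.integral_congr
      intro v hv
      rw [Set.uIcc_of_ge hy.le] at hv
      simp only
      rw [abs_of_nonpos hv.2]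
    rw [this]
    have h2 := intervalIntegral.integral_comp_neg (a := (0:ℝ)) (b := t - s) (fun v => v^n)
    rw [h2, neg_zero, integral_pow, abs_div,
      show (0:ℝ)^(n+1) - (-(t-s))^(n+1) = -((-(t-s))^(n+1)) by ring,
      abs_neg, abs_of_nonneg (pow_nonneg (by linarith : (0:ℝ) ≤ -(t-s)) (n+1)),
      abs_of_nonpos hy.le, abs_of_nonneg (by positivity : (0:ℝ) ≤ (n:ℝ)+1)]

theorem sigAux_summable_words (d : ℕ) {c : ℝ} (hc : 0 ≤ c) :
    Summable (fun w : List (Fin d) => c ^ w.length / (w.length).factorial) := by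
  rw [← (List.equivSigmaTuple (α := Fin d)).symm.summable_iff]
  have heq : ((fun w : List (Fin d) => c ^ w.length / (w.length).factorial) ∘
      ⇑(List.equivSigmaTuple (α := Fin d)).symm) =
      fun p : (n : ℕ) × (Fin n → Fin d) => c ^ p.1 / (p.1).factorial := by
    funext p
    rcases p with ⟨n, g⟩
    simp [List.equivSigmaTuple, Function.comp]
  rw [heq]
  apply (summable_sigma_of_nonneg ?_).2
  constructor
  · intro n
    exact .of_finite
  · have : ∀ n : ℕ, ∑' _ : Fin n → Fin d, c ^ n / n.factorial =
        (d*c) ^ n / n.factorial := by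
      intro n
      rw [tsum_const, nsmul_eq_mul]
      have : Nat.card (Fin n → Fin d) = d ^ n := by
        simp [Nat.card_eq_fintype_card, Fintype.card_fun]
      rw [this]
      push_cast
      rw [mul_pow]
      ring
    simp only [this]
    exact Real.summable_pow_div_factorial (d*c)
  · rintro ⟨n, g⟩
    positivity

theorem sigAux_summable_of_word_bound {d : ℕ} {g : List (Fin d) → ℝ} {c A : ℝ} (hc : 0 ≤ c)
    (h : ∀ w, |g w| ≤ A * (c ^ w.length / (w.length).factorial)) : Summable g :=
  Summable.of_norm_bounded ((sigAux_summable_words d hc).mul_left A) h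

/-- Derivative of `s ↦ sig X w 0 s`. -/
noncomputable def dsig {d : ℕ} (X : ℝ → Fin d → ℝ) (w : List (Fin d)) (s : ℝ) : ℝ :=
  if h : w = [] then 0
  else deriv (fun r => X r (w.getLast h)) s * sig X w.dropLast 0 s

theorem dsig_concat {d : ℕ} {X : ℝ → Fin d → ℝ} (v : List (Fin d)) (a : Fin d) (s : ℝ) :
    dsig X (v ++ [a]) s = deriv (fun r => X r a) s * sig X v 0 s := by
  rw [dsig, dif_neg (by simp)]
  rw [List.dropLast_concat]
  have h := List.getLast_concat (a := a) (l := v)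
  congr 1
  rw [h]

theorem sigAux_snoc_injective {d : ℕ} : Function.Injective
    (fun p : List (Fin d) × Fin d => p.1 ++ [p.2]) := by
  rintro ⟨v, a⟩ ⟨v', a'⟩ h
  simp only at h
  have h1 : v = v' := by
    have := congrArg List.dropLast h
    rwa [List.dropLast_concat, List.dropLast_concat] at this
  have h2 : a = a' := by
    have h3 := congrArg (fun l : List (Fin d) => l.getLast?) h
    simp only [List.getLast?_concat] at h3
    exact Option.some_injective _ h3
  exact Prod.ext h1 h2

section
variable {d : ℕ} {X : ℝ → Fin d → ℝ} (hX : ∀ a : Fin d, ContDiff ℝ 1 (fun t => X t a))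

theorem sig_concat_same (w : List (Fin d)) (a : Fin d) (t : ℝ) :
    sig X (w ++ [a]) t t = 0 := by
  cases w with
  | nil => simp [sig]
  | cons b v => simp [sig]

include hX

theorem sig_cont (w : List (Fin d)) : Continuous (fun p : ℝ × ℝ => sig X w p.1 p.2) := by
  induction w with
  | nil => simpa [sig] using continuous_const
  | cons a w ih =>
    have hDX : Continuous (deriv (fun r => X r a)) := (hX a).continuous_deriv le_rfl
    have hint : Continuous (fun q : (ℝ × ℝ) × ℝ =>
        deriv (fun r => X r a) q.2 * sig X w q.2 q.1.2) := by
      have : Continuous (fun q : (ℝ × ℝ) × ℝ => (q.2, q.1.2)) := by fun_prop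
      exact (hDX.comp continuous_snd).mul (ih.comp this)
    have h1 : Continuous (fun p : ℝ × ℝ => ∫ u in (0:ℝ)..p.2,
        deriv (fun r => X r a) u * sig X w u p.2) :=
      continuous_parametric_intervalIntegral_of_continuous (by exact hint) continuous_snd
    have h2 : Continuous (fun p : ℝ × ℝ => ∫ u in (0:ℝ)..p.1,
        deriv (fun r => X r a) u * sig X w u p.2) :=
      continuous_parametric_intervalIntegral_of_continuous (by exact hint) continuous_fst
    have key : ∀ p : ℝ × ℝ, sig X (a::w) p.1 p.2 =
        (∫ u in (0:ℝ)..p.2, deriv (fun r => X r a) u * sig X w u p.2)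
        - ∫ u in (0:ℝ)..p.1, deriv (fun r => X r a) u * sig X w u p.2 := by
      intro p
      have hci : ∀ b c : ℝ, IntervalIntegrable
          (fun u => deriv (fun r => X r a) u * sig X w u p.2) volume b c := by
        intro b c
        exact (hDX.mul (ih.comp (continuous_id.prodMk continuous_const))).intervalIntegrable _ _
      rw [show sig X (a::w) p.1 p.2 = ∫ u in p.1..p.2,
        deriv (fun r => X r a) u * sig X w u p.2 from rfl,
        ← intervalIntegral.integral_interval_sub_left (hci 0 p.2) (hci 0 p.1)]
    simp only [key]
    exact h1.sub h2

theorem sig_bound {R C : ℝ} (hC : 0 ≤ C)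
    (hbd : ∀ (a : Fin d) (u : ℝ), u ∈ Set.Icc (-R) R → |deriv (fun r => X r a) u| ≤ C) :
    ∀ (w : List (Fin d)) (s t : ℝ), s ∈ Set.Icc (-R) R → t ∈ Set.Icc (-R) R →
      |sig X w s t| ≤ C ^ w.length * |t - s| ^ w.length / (w.length).factorial := by
  intro w
  induction w with
  | nil => intro s t _ _; simp [sig]
  | cons a w ih =>
    intro s t hs ht
    set n := w.length with hn
    have hsub : Set.uIoc s t ⊆ Set.Icc (-R) R := by
      intro u hu
      rw [Set.mem_uIoc] at hu
      rcases hs with ⟨hs1, hs2⟩; rcases ht with ⟨ht1, ht2⟩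
      rcases hu with ⟨h1, h2⟩ | ⟨h1, h2⟩ <;> exact ⟨by linarith, by linarith⟩
    have hgi : IntervalIntegrable (fun u => C * C^n / n.factorial * |t - u|^n) volume s t := by
      apply Continuous.intervalIntegrable
      fun_prop
    have hb : ∀ᵐ u ∂(volume.restrict (Set.uIoc s t)),
        ‖deriv (fun r => X r a) u * sig X w u t‖ ≤ C * C^n / n.factorial * |t - u|^n := by
      rw [ae_restrict_iff' measurableSet_uIoc]
      refine ae_of_all _ fun u hu => ?_
      have hu' := hsub hu
      have h1 := hbd a u hu'
      have h2 := ih u t hu' ht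
      calc ‖deriv (fun r => X r a) u * sig X w u t‖
          = |deriv (fun r => X r a) u| * |sig X w u t| := abs_mul _ _
        _ ≤ C * (C^n * |t - u|^n / n.factorial) :=
            mul_le_mul h1 h2 (abs_nonneg _) hC
        _ = C * C^n / n.factorial * |t - u|^n := by ring
    have key := intervalIntegral.norm_integral_le_abs_of_norm_le hb hgi
    have heq : |∫ u in s..t, C * C^n / n.factorial * |t - u|^n| =
        C^(n+1) * |t - s|^(n+1) / (n+1).factorial := by
      rw [intervalIntegral.integral_const_mul, abs_mul, sigAux_abs_int_pow,
        abs_of_nonneg (by positivity : (0:ℝ) ≤ C * C^n / n.factorial)]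
      have : ((n+1).factorial : ℝ) = (n+1) * n.factorial := by push_cast [Nat.factorial_succ]; ring
      rw [this]
      have h1 : (0:ℝ) < n.factorial := by positivity
      field_simp
      ring
    calc |sig X (a::w) s t| ≤ |∫ u in s..t, C * C^n / n.factorial * |t - u|^n| := key
      _ = C^(n+1) * |t - s|^(n+1) / (n+1).factorial := heq
      _ = C^(List.length (a::w)) * |t - s|^(List.length (a::w)) /
          (List.length (a::w)).factorial := by simp [hn]

theorem sig_bound' {R C : ℝ} (hC : 0 ≤ C) (hR : 0 ≤ R)
    (hbd : ∀ (a : Fin d) (u : ℝ), u ∈ Set.Icc (-R) R → |deriv (fun r => X r a) u| ≤ C) :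
    ∀ (w : List (Fin d)) (s t : ℝ), s ∈ Set.Icc (-R) R → t ∈ Set.Icc (-R) R →
      |sig X w s t| ≤ (C * (2*R)) ^ w.length / (w.length).factorial := by
  intro w s t hs ht
  calc |sig X w s t| ≤ C ^ w.length * |t - s| ^ w.length / (w.length).factorial :=
        sig_bound hX hC hbd w s t hs ht
    _ ≤ C ^ w.length * (2*R) ^ w.length / (w.length).factorial := by
        have habs : |t - s| ≤ 2*R := by
          rcases hs with ⟨h1,h2⟩; rcases ht with ⟨h3,h4⟩
          rw [abs_le]; constructor <;> linarith
        have h1 := pow_le_pow_left₀ (abs_nonneg (t-s)) habs w.length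
        have h2 : C ^ w.length * |t-s|^w.length ≤ C^w.length * (2*R)^w.length :=
          mul_le_mul_of_nonneg_left h1 (by positivity)
        have h3 : (0:ℝ) < (w.length).factorial := by positivity
        exact (div_le_div_iff_of_pos_right h3).2 h2
    _ = (C * (2*R)) ^ w.length / (w.length).factorial := by rw [mul_pow]; ring

theorem hasDerivAt_sig_snoc (w : List (Fin d)) (a : Fin d) (s t : ℝ) :
    HasDerivAt (fun t' => sig X (w ++ [a]) s t')
      (deriv (fun r => X r a) t * sig X w s t) t := by
  induction w generalizing s t with
  | nil =>
    have hc : Continuous (deriv (fun r => X r a)) := (hX a).continuous_deriv le_rfl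
    have h0 : (fun t' => sig X ([] ++ [a]) s t') =
        fun t' => ∫ u in s..t', deriv (fun r => X r a) u := by
      funext t'
      show (∫ u in s..t', deriv (fun r => X r a) u * sig X [] u t') = _
      simp [sig]
    rw [h0]
    simp only [sig, mul_one]
    exact (hc.integral_hasStrictDerivAt s t).hasDerivAt
  | cons b v ih =>
    set DXa := deriv (fun r => X r a) with hDXa
    set DXb := deriv (fun r => X r b) with hDXb
    have hca : Continuous DXa := (hX a).continuous_deriv le_rfl
    have hcb : Continuous DXb := (hX b).continuous_deriv le_rfl
    have hcsig : Continuous (fun p : ℝ × ℝ => sig X (v ++ [a]) p.1 p.2) := sig_cont hX _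
    have hcsigv : Continuous (fun p : ℝ × ℝ => sig X v p.1 p.2) := sig_cont hX _
    set f : ℝ → ℝ → ℝ := fun u y => DXb u * sig X (v ++ [a]) u y with hf
    have hfc : Continuous (fun p : ℝ × ℝ => f p.1 p.2) := by
      apply (hcb.comp continuous_fst).mul
      exact hcsig.comp (continuous_fst.prodMk continuous_snd)
    have hfyc : ∀ y, Continuous (fun u => f u y) := fun y =>
      hfc.comp (continuous_id.prodMk continuous_const)
    have hfint : ∀ y c c', IntervalIntegrable (fun u => f u y) volume c c' := fun y c c' =>
      (hfyc y).intervalIntegrable c c'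
    have hsplit : (fun t' => sig X ((b::v) ++ [a]) s t') =
        fun t' => (∫ u in s..t, f u t') + ((∫ u in t..t', f u t) +
          (∫ u in t..t', (f u t' - f u t))) := by
      funext t'
      show (∫ u in s..t', DXb u * sig X (v ++ [a]) u t') = _
      rw [← intervalIntegral.integral_add_adjacent_intervals (hfint t' s t) (hfint t' t t')]
      congr 1
      rw [← intervalIntegral.integral_add (hfint t t t') ((hfint t' t t').sub (hfint t t t'))]
      congr 1; funext u; ring
    rw [hsplit]
    have hg'c : Continuous (fun p : ℝ × ℝ => DXb p.1 * (DXa p.2 * sig X v p.1 p.2)) := by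
      apply (hcb.comp continuous_fst).mul
      exact (hca.comp continuous_snd).mul hcsigv
    obtain ⟨M, hM⟩ := ((isCompact_uIcc (a := s) (b := t)).prod
      (isCompact_Icc (a := t - 1) (b := t + 1))).exists_bound_of_continuousOn
      hg'c.continuousOn
    have h1 : HasDerivAt (fun t' => ∫ u in s..t, f u t')
        (DXa t * sig X (b::v) s t) t := by
      have key := intervalIntegral.hasDerivAt_integral_of_dominated_loc_of_deriv_le
        (F := fun y u => f u y) (F' := fun y u => DXb u * (DXa y * sig X v u y))
        (x₀ := t) (a := s) (b := t) (bound := fun _ => M) (s := Metric.ball t 1) (Metric.ball_mem_nhds t one_pos)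
        (Filter.Eventually.of_forall fun y => ((hfyc y).aestronglyMeasurable))
        (hfint t s t)
        ((hg'c.comp (continuous_id.prodMk continuous_const)).aestronglyMeasurable)
        ?_ (intervalIntegrable_const) ?_
      · have heq : (∫ u in s..t, DXb u * (DXa t * sig X v u t)) =
            DXa t * sig X (b::v) s t := by
          show _ = DXa t * ∫ u in s..t, DXb u * sig X v u t
          rw [← intervalIntegral.integral_const_mul]
          congr 1; funext u; ring
        rw [← heq]
        exact key.2
      · refine ae_of_all _ fun u hu y hy => ?_
        have hu' : u ∈ Set.uIcc s t := Set.uIoc_subset_uIcc hu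
        have hy' : y ∈ Set.Icc (t-1) (t+1) := by
          rw [Metric.mem_ball, Real.dist_eq] at hy
          constructor <;> [linarith [abs_lt.1 hy]; linarith [(abs_lt.1 hy).2]]
        exact hM (u, y) ⟨hu', hy'⟩
      · refine ae_of_all _ fun u hu y hy => ?_
        exact (ih u y).const_mul (DXb u)
    have h2 : HasDerivAt (fun t' => ∫ u in t..t', f u t) (0:ℝ) t := by
      have := ((hfyc t).integral_hasStrictDerivAt t t).hasDerivAt
      have hz : f t t = 0 := by
        show DXb t * sig X (v ++ [a]) t t = 0
        rw [sig_concat_same]; ring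
      rwa [hz] at this
    have h3 : HasDerivAt (fun t' => ∫ u in t..t', (f u t' - f u t)) (0:ℝ) t := by
      set J := Set.Icc (t-1) (t+1) with hJ
      obtain ⟨M₂, hM₂⟩ := ((isCompact_Icc (a := t-1) (b := t+1)).prod
        (isCompact_Icc (a := t-1) (b := t+1))).exists_bound_of_continuousOn
        (Continuous.continuousOn (by
          exact (hca.comp continuous_snd).mul hcsigv :
            Continuous (fun p : ℝ × ℝ => DXa p.2 * sig X v p.1 p.2)))
      obtain ⟨M₃, hM₃⟩ := (isCompact_Icc (a := t-1) (b := t+1)).exists_bound_of_continuousOn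
        hcb.continuousOn
      have hM₂0 : 0 ≤ M₂ := le_trans (norm_nonneg _)
        (hM₂ (t,t) ⟨⟨by linarith, by linarith⟩, ⟨by linarith, by linarith⟩⟩)
      have hM₃0 : 0 ≤ M₃ := le_trans (norm_nonneg _) (hM₃ t (by constructor <;> linarith))
      set K := M₃ * M₂ with hK
      have hK0 : 0 ≤ K := mul_nonneg hM₃0 hM₂0
      have hlip : ∀ u ∈ J, ∀ y ∈ J, |f u y - f u t| ≤ K * |y - t| := by
        intro u hu y hy
        have hsigLip : ‖sig X (v ++ [a]) u y - sig X (v ++ [a]) u t‖ ≤ M₂ * ‖y - t‖ := by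
          apply Convex.norm_image_sub_le_of_norm_hasDerivWithin_le (𝕜 := ℝ)
            (f' := fun y' => DXa y' * sig X v u y')
            (fun x hx => (ih u x).hasDerivWithinAt) (fun x hx => hM₂ (u,x) ⟨hu, hx⟩)
            (convex_Icc _ _) (by constructor <;> linarith) hy
        have : |f u y - f u t| = |DXb u| * |sig X (v ++ [a]) u y - sig X (v ++ [a]) u t| := by
          rw [← abs_mul]; congr 1; show DXb u * _ - DXb u * _ = _; ring
        rw [this]
        calc |DXb u| * |sig X (v ++ [a]) u y - sig X (v ++ [a]) u t|
            ≤ M₃ * (M₂ * |y - t|) :=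
              mul_le_mul (hM₃ u hu) hsigLip (abs_nonneg _) hM₃0
          _ = K * |y - t| := by ring
      have hEbound : ∀ t', t' ∈ J → |∫ u in t..t', (f u t' - f u t)| ≤ K * |t' - t| * |t' - t| := by
        intro t' ht'
        have : ∀ u ∈ Set.uIoc t t', ‖f u t' - f u t‖ ≤ K * |t' - t| := by
          intro u hu
          have hu' : u ∈ J := by
            have := Set.uIoc_subset_uIcc hu
            rw [Set.mem_uIcc] at this
            rcases ht' with ⟨h1, h2⟩
            rcases this with ⟨h3, h4⟩ | ⟨h3, h4⟩ <;> exact ⟨by linarith, by linarith⟩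
          exact hlip u hu' t' ht'
        calc ‖∫ u in t..t', (f u t' - f u t)‖ ≤ (K * |t' - t|) * |t' - t| :=
              intervalIntegral.norm_integral_le_of_norm_le_const this
          _ = K * |t' - t| * |t' - t| := by ring
      rw [hasDerivAt_iff_isLittleO]
      simp only [sub_zero, zero_mul, smul_eq_mul, mul_zero, intervalIntegral.integral_same,
        sub_self]
      rw [Asymptotics.isLittleO_iff]
      intro c hc
      have hδ : 0 < min 1 (c / (K + 1)) := lt_min one_pos (by positivity)
      filter_upwards [Metric.ball_mem_nhds t hδ] with t' ht'
      rw [Metric.mem_ball, Real.dist_eq, lt_min_iff] at ht'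
      have ht'J : t' ∈ J := by
        rcases abs_lt.1 ht'.1 with ⟨h1, h2⟩
        exact ⟨by linarith, by linarith⟩
      have h5 := hEbound t' ht'J
      have h6 : K * |t' - t| ≤ c := by
        have h7 : |t' - t| ≤ c / (K + 1) := (ht'.2).le
        calc K * |t' - t| ≤ K * (c / (K + 1)) :=
              mul_le_mul_of_nonneg_left h7 hK0
          _ ≤ c := by
              rw [div_eq_mul_inv]
              rw [show K * (c * (K+1)⁻¹) = c * (K * (K+1)⁻¹) by ring]
              have : K * (K+1)⁻¹ ≤ 1 := by
                rw [mul_inv_le_iff₀ (by linarith)]; linarith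
              nlinarith [hc.le]
      calc ‖∫ u in t..t', (f u t' - f u t)‖ ≤ K * |t' - t| * |t' - t| := h5
        _ ≤ c * |t' - t| := mul_le_mul_of_nonneg_right h6 (abs_nonneg _)
        _ = c * ‖t' - t‖ := rfl
    have := h1.add (h2.add h3)
    rw [add_zero, add_zero] at this
    exact this

theorem hasDerivAt_sig_zero (w : List (Fin d)) (s : ℝ) :
    HasDerivAt (fun s' => sig X w 0 s') (dsig X w s) s := by
  rcases List.eq_nil_or_concat w with rfl | ⟨L, b, rfl⟩
  · have : dsig X ([] : List (Fin d)) s = 0 := by rw [dsig, dif_pos rfl]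
    rw [this]
    exact (hasDerivAt_const s (1:ℝ)).congr_of_eventuallyEq
      (Filter.Eventually.of_forall fun t => by simp [sig])
  · rw [List.concat_eq_append, dsig_concat]
    exact hasDerivAt_sig_snoc hX L b 0 s

theorem dsig_bound {R C : ℝ} (hC : 0 ≤ C) (hR : 0 ≤ R)
    (hbd : ∀ (a : Fin d) (u : ℝ), u ∈ Set.Icc (-R) R → |deriv (fun r => X r a) u| ≤ C) :
    ∀ (w : List (Fin d)) (s : ℝ), s ∈ Set.Icc (-R) R →
      |dsig X w s| ≤ C * ((2*(C*(2*R))+2) ^ w.length / (w.length).factorial) := by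
  intro w s hs
  rcases List.eq_nil_or_concat w with rfl | ⟨L, b, rfl⟩
  · rw [dsig, dif_pos rfl]
    simp only [abs_zero]
    positivity
  · rw [List.concat_eq_append, dsig_concat]
    set Q := C * (2*R) with hQ
    have hQ0 : 0 ≤ Q := by positivity
    set m := L.length with hm
    have h0 : s ∈ Set.Icc (-R) R := hs
    have h1 : |deriv (fun r => X r b) s * sig X L 0 s| ≤ C * (Q ^ m / m.factorial) := by
      rw [abs_mul]
      apply mul_le_mul (hbd b s h0) (sig_bound' hX hC hR hbd L 0 s ⟨by linarith, by linarith⟩ h0)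
        (abs_nonneg _) hC
    refine h1.trans ?_
    rw [List.length_append, List.length_singleton]
    have key : Q ^ m / (m.factorial : ℝ) ≤ (2*Q+2) ^ (m+1) / ((m+1).factorial : ℝ) := by
      rw [div_le_div_iff₀ (by positivity) (by positivity)]
      have hfact : ((m+1).factorial : ℝ) = (m+1) * m.factorial := by
        push_cast [Nat.factorial_succ]; ring
      rw [hfact]
      have h2 : ((m:ℝ)+1) ≤ 2 ^ (m+1) := by
        have := Nat.lt_two_pow_self (n := m+1)
        exact_mod_cast this.le
      have h3 : Q ^ m ≤ (Q+1) ^ (m+1) := by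
        calc Q ^ m ≤ (Q+1) ^ m := pow_le_pow_left₀ hQ0 (by linarith) m
          _ ≤ (Q+1) ^ (m+1) := pow_le_pow_right₀ (by linarith) (Nat.le_succ m)
      calc Q ^ m * (((m:ℝ)+1) * m.factorial)
          ≤ (Q+1)^(m+1) * (2^(m+1) * m.factorial) := by
            apply mul_le_mul h3 (by
              apply mul_le_mul_of_nonneg_right h2 (by positivity)) (by positivity) (by positivity)
        _ = (2*(Q+1))^(m+1) * m.factorial := by rw [mul_pow]; ring
        _ = (2*Q+2)^(m+1) * m.factorial := by ring_nf
    calc C * (Q ^ m / m.factorial) ≤ C * ((2*Q+2) ^ (m+1) / (m+1).factorial) :=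
          mul_le_mul_of_nonneg_left key hC

end

/-- The signature kernel `U(s,t) = k(X|_{[0,s]}, Y|_{[0,t]}) = Σ_w S(X|_{[0,s]})^w S(Y|_{[0,t]})^w`
satisfies the hyperbolic PDE `∂²U/∂s∂t = (Ẋ_s · Ẏ_t) U` with boundary conditions
`U(0,·) = 1` and `U(·,0) = 1`. -/
theorem signature_kernel_PDE {d : ℕ} (T : ℝ) (hT : 0 < T)
    (X Y : ℝ → Fin d → ℝ)
    (hX : ∀ a : Fin d, ContDiff ℝ 1 (fun t => X t a))
    (hY : ∀ a : Fin d, ContDiff ℝ 1 (fun t => Y t a)) :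
    (∀ s ∈ Set.Icc (0:ℝ) T, ∀ t ∈ Set.Icc (0:ℝ) T,
      deriv (fun s' => deriv
          (fun t' => ∑' w : List (Fin d), sig X w 0 s' * sig Y w 0 t') t) s
        = (∑ a : Fin d, deriv (fun r => X r a) s * deriv (fun r => Y r a) t)
            * ∑' w : List (Fin d), sig X w 0 s * sig Y w 0 t)
    ∧ (∀ t : ℝ, (∑' w : List (Fin d), sig X w 0 0 * sig Y w 0 t) = 1)
    ∧ (∀ s : ℝ, (∑' w : List (Fin d), sig X w 0 s * sig Y w 0 0) = 1) := by
  have hnil0 : ∀ (Z : ℝ → Fin d → ℝ) (w : List (Fin d)) (t : ℝ), w ≠ [] → sig Z w t t = 0 := by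
    intro Z w t hw
    cases w with
    | nil => exact absurd rfl hw
    | cons a v =>
      show (∫ u in t..t, deriv (fun r => Z r a) u * sig Z v u t) = 0
      simp
  refine ⟨?_, ?_, ?_⟩
  · intro s hs t ht
    set R := T + 2 with hRdef
    have hR0 : (0:ℝ) ≤ R := by rw [hRdef]; linarith
    set I := Set.Ioo (-R) R with hIdef
    have hIopen : IsOpen I := isOpen_Ioo
    have hIconn : IsPreconnected I := (convex_Ioo (-R) R).isPreconnected
    have hsub : I ⊆ Set.Icc (-R) R := Set.Ioo_subset_Icc_self
    have hsI : s ∈ I := ⟨by rcases hs with ⟨h1, h2⟩; rw [hRdef]; linarith,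
      by rcases hs with ⟨h1, h2⟩; rw [hRdef]; linarith⟩
    have htI : t ∈ I := ⟨by rcases ht with ⟨h1, h2⟩; rw [hRdef]; linarith,
      by rcases ht with ⟨h1, h2⟩; rw [hRdef]; linarith⟩
    have h0I : (0:ℝ) ∈ I := ⟨by rw [hRdef]; linarith, by rw [hRdef]; linarith⟩
    -- a uniform bound on the derivatives of the coordinates
    have hbX : ∀ a : Fin d, ∃ Ca, ∀ u ∈ Set.Icc (-R) R,
        ‖deriv (fun r => X r a) u‖ ≤ Ca := fun a =>
      isCompact_Icc.exists_bound_of_continuousOn ((hX a).continuous_deriv le_rfl).continuousOn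
    have hbY : ∀ a : Fin d, ∃ Ca, ∀ u ∈ Set.Icc (-R) R,
        ‖deriv (fun r => Y r a) u‖ ≤ Ca := fun a =>
      isCompact_Icc.exists_bound_of_continuousOn ((hY a).continuous_deriv le_rfl).continuousOn
    choose CX hCX using hbX
    choose CY hCY using hbY
    obtain ⟨C₀, hC₀⟩ := Finite.exists_le (fun a : Fin d => max (CX a) (CY a))
    set C := max C₀ 0 with hCdef
    have hC0 : 0 ≤ C := le_max_right _ _
    have hbdX : ∀ (a : Fin d) (u : ℝ), u ∈ Set.Icc (-R) R →
        |deriv (fun r => X r a) u| ≤ C := by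
      intro a u hu
      calc |deriv (fun r => X r a) u| ≤ CX a := hCX a u hu
        _ ≤ max (CX a) (CY a) := le_max_left _ _
        _ ≤ C₀ := hC₀ a
        _ ≤ C := le_max_left _ _
    have hbdY : ∀ (a : Fin d) (u : ℝ), u ∈ Set.Icc (-R) R →
        |deriv (fun r => Y r a) u| ≤ C := by
      intro a u hu
      calc |deriv (fun r => Y r a) u| ≤ CY a := hCY a u hu
        _ ≤ max (CX a) (CY a) := le_max_right _ _
        _ ≤ C₀ := hC₀ a
        _ ≤ C := le_max_left _ _
    set Q := C * (2*R) with hQdef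
    have hQ0 : 0 ≤ Q := by positivity
    set P := 2*Q+2 with hPdef
    have hP0 : 0 ≤ P := by positivity
    -- per-word bounds
    have bX : ∀ (w : List (Fin d)) (σ : ℝ), σ ∈ Set.Icc (-R) R →
        |sig X w 0 σ| ≤ Q ^ w.length / (w.length).factorial := fun w σ hσ =>
      sig_bound' hX hC0 hR0 hbdX w 0 σ ⟨by linarith, by linarith⟩ hσ
    have dBX : ∀ (w : List (Fin d)) (σ : ℝ), σ ∈ Set.Icc (-R) R →
        |dsig X w σ| ≤ C * (P ^ w.length / (w.length).factorial) := fun w σ hσ =>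
      dsig_bound hX hC0 hR0 hbdX w σ hσ
    have dBY : ∀ (w : List (Fin d)) (σ : ℝ), σ ∈ Set.Icc (-R) R →
        |dsig Y w σ| ≤ C * (P ^ w.length / (w.length).factorial) := fun w σ hσ =>
      dsig_bound hY hC0 hR0 hbdY w σ hσ
    -- denominator trick
    have htrick : ∀ (n : ℕ) (a b : ℝ), 0 ≤ a → 0 ≤ b →
        (a^n/(n.factorial:ℝ)) * (b^n/(n.factorial:ℝ)) ≤ (a*b)^n/(n.factorial:ℝ) := by
      intro n a b ha hb
      rw [mul_pow, div_mul_div_comm]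
      have h1 : (1:ℝ) ≤ (n.factorial : ℝ) := by exact_mod_cast n.factorial_pos
      have h2 : (0:ℝ) < (n.factorial : ℝ) := by positivity
      apply div_le_div_of_nonneg_left (by positivity) h2 (by nlinarith)
    -- Step 1: derivative in t of the double series
    have hstep1 : ∀ s' ∈ I, ∀ t'' ∈ I,
        HasDerivAt (fun t' => ∑' w : List (Fin d), sig X w 0 s' * sig Y w 0 t')
          (∑' w : List (Fin d), sig X w 0 s' * dsig Y w t'') t'' := by
      intro s' hs' t'' ht''
      have hs'c := hsub hs'
      apply hasDerivAt_tsum_of_isPreconnected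
        (u := fun w : List (Fin d) => C * ((Q*P) ^ w.length / (w.length).factorial))
        (Summable.mul_left C (sigAux_summable_words d (by positivity)))
        hIopen hIconn
        (g := fun w t' => sig X w 0 s' * sig Y w 0 t')
        (g' := fun w y => sig X w 0 s' * dsig Y w y)
        (fun w y _ => (hasDerivAt_sig_zero hY w y).const_mul (sig X w 0 s'))
        ?_ h0I ?_ ht''
      · intro w y hy
        rw [Real.norm_eq_abs, abs_mul]
        calc |sig X w 0 s'| * |dsig Y w y|
            ≤ (Q ^ w.length / (w.length).factorial) *
              (C * (P ^ w.length / (w.length).factorial)) :=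
              mul_le_mul (bX w s' hs'c) (dBY w y (hsub hy)) (abs_nonneg _) (by positivity)
          _ = C * ((Q ^ w.length / (w.length).factorial) *
              (P ^ w.length / (w.length).factorial)) := by ring
          _ ≤ C * ((Q*P) ^ w.length / (w.length).factorial) :=
              mul_le_mul_of_nonneg_left (htrick w.length Q P hQ0 hP0) hC0
      · apply summable_of_ne_finset_zero (s := {([] : List (Fin d))})
        intro w hw
        simp only [Finset.mem_singleton] at hw
        show sig X w 0 s' * sig Y w 0 0 = 0
        rw [hnil0 Y w 0 hw, mul_zero]
    -- Step 2-3: rewrite the inner derivative on a neighborhood of s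
    have heq : (fun s' => deriv (fun t' => ∑' w : List (Fin d),
        sig X w 0 s' * sig Y w 0 t') t)
        =ᶠ[nhds s] (fun s' => ∑' w : List (Fin d), sig X w 0 s' * dsig Y w t) := by
      filter_upwards [hIopen.mem_nhds hsI] with s' hs'
      exact (hstep1 s' hs' t htI).deriv
    rw [heq.deriv_eq]
    -- Step 4: derivative in s
    have hstep4 : HasDerivAt (fun s' => ∑' w : List (Fin d), sig X w 0 s' * dsig Y w t)
        (∑' w : List (Fin d), dsig X w s * dsig Y w t) s := by
      apply hasDerivAt_tsum_of_isPreconnected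
        (u := fun w : List (Fin d) => (C*C) * ((P*P) ^ w.length / (w.length).factorial))
        (Summable.mul_left _ (sigAux_summable_words d (by positivity)))
        hIopen hIconn
        (g := fun w s' => sig X w 0 s' * dsig Y w t)
        (g' := fun w y => dsig X w y * dsig Y w t)
        (fun w y _ => (hasDerivAt_sig_zero hX w y).mul_const (dsig Y w t))
        ?_ h0I ?_ hsI
      · intro w y hy
        rw [Real.norm_eq_abs, abs_mul]
        calc |dsig X w y| * |dsig Y w t|
            ≤ (C * (P ^ w.length / (w.length).factorial)) *
              (C * (P ^ w.length / (w.length).factorial)) :=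
              mul_le_mul (dBX w y (hsub hy)) (dBY w t (hsub htI)) (abs_nonneg _) (by positivity)
          _ = (C*C) * ((P ^ w.length / (w.length).factorial) *
              (P ^ w.length / (w.length).factorial)) := by ring
          _ ≤ (C*C) * ((P*P) ^ w.length / (w.length).factorial) :=
              mul_le_mul_of_nonneg_left (htrick w.length P P hP0 hP0) (by positivity)
      · apply summable_of_ne_finset_zero (s := {([] : List (Fin d))})
        intro w hw
        simp only [Finset.mem_singleton] at hw
        show sig X w 0 0 * dsig Y w t = 0
        rw [hnil0 X w 0 hw, zero_mul]
    rw [hstep4.deriv]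
    -- Step 5: reindex through (v, a) ↦ v ++ [a]
    have hsumF : Summable (fun w : List (Fin d) => dsig X w s * dsig Y w t) := by
      apply sigAux_summable_of_word_bound (c := P*P) (A := C*C) (by positivity)
      intro w
      rw [abs_mul]
      calc |dsig X w s| * |dsig Y w t|
          ≤ (C * (P ^ w.length / (w.length).factorial)) *
            (C * (P ^ w.length / (w.length).factorial)) :=
            mul_le_mul (dBX w s (hsub hsI)) (dBY w t (hsub htI)) (abs_nonneg _) (by positivity)
        _ = (C*C) * ((P ^ w.length / (w.length).factorial) *
            (P ^ w.length / (w.length).factorial)) := by ring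
        _ ≤ (C*C) * ((P*P) ^ w.length / (w.length).factorial) :=
            mul_le_mul_of_nonneg_left (htrick w.length P P hP0 hP0) (by positivity)
    have hrange : Function.support (fun w : List (Fin d) => dsig X w s * dsig Y w t)
        ⊆ Set.range (fun p : List (Fin d) × Fin d => p.1 ++ [p.2]) := by
      intro w hw
      rcases List.eq_nil_or_concat w with rfl | ⟨L, b, rfl⟩
      · exfalso
        apply hw
        show dsig X [] s * dsig Y [] t = 0
        rw [dsig, dif_pos rfl, zero_mul]
      · exact ⟨(L, b), (List.concat_eq_append (as := L) (a := b)).symm⟩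
    rw [← Function.Injective.tsum_eq sigAux_snoc_injective hrange]
    have hFi : Summable (fun p : List (Fin d) × Fin d =>
        dsig X (p.1 ++ [p.2]) s * dsig Y (p.1 ++ [p.2]) t) :=
      hsumF.comp_injective sigAux_snoc_injective
    simp only [dsig_concat]
    simp only [dsig_concat] at hFi
    rw [Summable.tsum_prod' hFi (fun v => Summable.of_finite)]
    have hinner : ∀ v : List (Fin d),
        (∑' a : Fin d, (deriv (fun r => X r a) s * sig X v 0 s) *
          (deriv (fun r => Y r a) t * sig Y v 0 t))
        = (∑ a : Fin d, deriv (fun r => X r a) s * deriv (fun r => Y r a) t) *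
            (sig X v 0 s * sig Y v 0 t) := by
      intro v
      rw [tsum_fintype, Finset.sum_mul]
      apply Finset.sum_congr rfl
      intro a _
      ring
    rw [tsum_congr hinner, tsum_mul_left]
  · intro t
    rw [tsum_eq_single ([] : List (Fin d)) ?_]
    · show sig X [] 0 0 * sig Y [] 0 t = 1
      show (1:ℝ) * 1 = 1
      rw [mul_one]
    · intro w hw
      rw [hnil0 X w 0 hw, zero_mul]
  · intro s
    rw [tsum_eq_single ([] : List (Fin d)) ?_]
    · show sig X [] 0 s * sig Y [] 0 0 = 1
      show (1:ℝ) * 1 = 1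
      rw [mul_one]
    · intro w hw
      rw [hnil0 Y w 0 hw, mul_zero]
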